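/- Let k = ℝ or ℂ, n ≥ 2, 0 < ε ≤ 1, M ≥ 1, let x ∈ k^n be a unit vector and V ⊂ k^n a hyperplane. Let w = h·diag(κ_1, …, κ_n)·h⁻¹ ∈ GL_n(k), where h ∈ GL_n(k) satisfies ‖h‖ ≤ M and ‖h⁻¹‖ ≤ M, d_ℙ([h e_1], [x]) ≤ ε/10, ℙ(h·span(e_2, …, e_n)) ⊆ N_{ε/10}(ℙ(V)), and κ_1, …, κ_n ∈ k^× satisfy |κ_1| ≥ (10M/ε)^{12}·|κ_i| for i = 2, …, n. Then for every x' ∈ ℙ(k^n) with dist(x', ℙ(V)) ≥ ε, every θ with 0 < θ < ε/2, and every integer s ≥ 1: for all x'' ∈ B_θ(x') one has d_ℙ(w^s·x'', w^s·x') ≤ θ·(max_{2≤i≤n} |κ_i| / |κ_1|)^{s/2} and d_ℙ(w^s·x'', [h e_1]) ≤ ε^{11}. -/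

import Mathlib

noncomputable section

/-- Euclidean norm on `Fin n → 𝕜`. -/
def eN {𝕜 : Type*} [RCLike 𝕜] {n : ℕ} (v : Fin n → 𝕜) : ℝ :=
  Real.sqrt (∑ i, ‖v i‖ ^ 2)

/-- Projective distance between (the lines spanned by) two nonzero vectors. -/
def dP {𝕜 : Type*} [RCLike 𝕜] {n : ℕ} (u v : Fin n → 𝕜) : ℝ :=
  sInf {r : ℝ | ∃ a b ζ : 𝕜, eN (a • u) = 1 ∧ eN (b • v) = 1 ∧ ‖ζ‖ = 1 ∧
    r = eN (ζ • a • u - b • v)}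

/-- Distance from a projective point to the projectivization of a subspace. -/
def distPS {𝕜 : Type*} [RCLike 𝕜] {n : ℕ} (u : Fin n → 𝕜)
    (W : Submodule 𝕜 (Fin n → 𝕜)) : ℝ :=
  sInf {r : ℝ | ∃ w : Fin n → 𝕜, w ∈ W ∧ w ≠ 0 ∧ r = dP u w}

/-- Operator norm of a square matrix with respect to the Euclidean norm. -/
def opN {𝕜 : Type*} [RCLike 𝕜] {n : ℕ} (A : Matrix (Fin n) (Fin n) 𝕜) : ℝ :=
  sInf {c : ℝ | 0 ≤ c ∧ ∀ v : Fin n → 𝕜, eN (A.mulVec v) ≤ c * eN v}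

set_option linter.unusedSectionVars false
namespace S11
variable {𝕜 : Type*} [RCLike 𝕜] {n : ℕ}

def toE (v : Fin n → 𝕜) : EuclideanSpace 𝕜 (Fin n) := (WithLp.equiv 2 (Fin n → 𝕜)).symm v

lemma eN_def (v : Fin n → 𝕜) : eN v = ‖toE v‖ := by
  rw [EuclideanSpace.norm_eq]; rfl
lemma toE_add (u v : Fin n → 𝕜) : toE (u + v) = toE u + toE v := rfl
lemma toE_sub (u v : Fin n → 𝕜) : toE (u - v) = toE u - toE v := rfl
lemma toE_smul (a : 𝕜) (v : Fin n → 𝕜) : toE (a • v) = a • toE v := rfl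
lemma toE_zero : toE (0 : Fin n → 𝕜) = 0 := rfl
lemma toE_inj {u v : Fin n → 𝕜} (h : toE u = toE v) : u = v := by
  simpa [toE] using h

lemma eN_nonneg (v : Fin n → 𝕜) : 0 ≤ eN v := by rw [eN_def]; positivity
lemma eN_zero : eN (0 : Fin n → 𝕜) = 0 := by rw [eN_def, toE_zero, norm_zero]
lemma eN_eq_zero {v : Fin n → 𝕜} : eN v = 0 ↔ v = 0 := by
  rw [eN_def, norm_eq_zero]
  constructor
  · intro h; simpa using toE_inj (by simpa [toE_zero] using h)
  · rintro rfl; rw [toE_zero]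
lemma eN_pos {v : Fin n → 𝕜} (h : v ≠ 0) : 0 < eN v :=
  lt_of_le_of_ne (eN_nonneg v) (fun e => h (eN_eq_zero.mp e.symm))
lemma eN_smul (a : 𝕜) (v : Fin n → 𝕜) : eN (a • v) = ‖a‖ * eN v := by
  rw [eN_def, eN_def, toE_smul, norm_smul]
lemma eN_add_le (u v : Fin n → 𝕜) : eN (u + v) ≤ eN u + eN v := by
  rw [eN_def, eN_def, eN_def, toE_add]; exact norm_add_le _ _
lemma eN_sub_le (u v w : Fin n → 𝕜) : eN (u - w) ≤ eN (u - v) + eN (v - w) := by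
  rw [eN_def, eN_def, eN_def, toE_sub, toE_sub, toE_sub]; exact norm_sub_le_norm_sub_add_norm_sub _ _ _
lemma eN_neg (v : Fin n → 𝕜) : eN (-v) = eN v := by
  have : (-v : Fin n → 𝕜) = (-1 : 𝕜) • v := by ext i; simp
  rw [this, eN_smul]; simp

/-- the canonical unit representative -/
def unit (v : Fin n → 𝕜) : Fin n → 𝕜 := ((eN v)⁻¹ : ℝ) • v

lemma unit_smul_eq (v : Fin n → 𝕜) :
    unit v = ((((eN v)⁻¹ : ℝ) : 𝕜)) • v := by
  ext i; simp [unit, RCLike.real_smul_eq_coe_mul]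
lemma eN_unit {v : Fin n → 𝕜} (hv : v ≠ 0) : eN (unit v) = 1 := by
  rw [unit_smul_eq, eN_smul]
  rw [RCLike.norm_ofReal, abs_of_nonneg (by simp [eN_nonneg v, inv_nonneg])]
  field_simp [ne_of_gt (eN_pos hv)]

/-- reformulated defining set -/
def dset (u v : Fin n → 𝕜) : Set ℝ :=
  {r : ℝ | ∃ ζ : 𝕜, ‖ζ‖ = 1 ∧ r = eN (ζ • unit u - unit v)}

lemma ofReal_eN_ne_zero {v : Fin n → 𝕜} (hv : v ≠ 0) : ((eN v : ℝ) : 𝕜) ≠ 0 := by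
  simpa using (ne_of_gt (eN_pos hv))

lemma dset_eq (u v : Fin n → 𝕜) (hu : u ≠ 0) (hv : v ≠ 0) :
    {r : ℝ | ∃ a b ζ : 𝕜, eN (a • u) = 1 ∧ eN (b • v) = 1 ∧ ‖ζ‖ = 1 ∧
      r = eN (ζ • a • u - b • v)} = dset u v := by
  ext r
  constructor
  · rintro ⟨a, b, ζ, ha, hb, hζ, rfl⟩
    set α : 𝕜 := a * ((eN u : ℝ) : 𝕜) with hα
    set β : 𝕜 := b * ((eN v : ℝ) : 𝕜) with hβ
    have hau : a • u = α • unit u := by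
      rw [unit_smul_eq, smul_smul, RCLike.ofReal_inv, hα, mul_assoc,
        mul_inv_cancel₀ (ofReal_eN_ne_zero hu), mul_one]
    have hbv : b • v = β • unit v := by
      rw [unit_smul_eq, smul_smul, RCLike.ofReal_inv, hβ, mul_assoc,
        mul_inv_cancel₀ (ofReal_eN_ne_zero hv), mul_one]
    have hnα : ‖α‖ = 1 := by
      have : eN (a • u) = ‖a‖ * eN u := eN_smul a u
      rw [this] at ha
      rw [hα, norm_mul, RCLike.norm_ofReal, abs_of_nonneg (eN_nonneg u)]; exact ha
    have hnβ : ‖β‖ = 1 := by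
      have : eN (b • v) = ‖b‖ * eN v := eN_smul b v
      rw [this] at hb
      rw [hβ, norm_mul, RCLike.norm_ofReal, abs_of_nonneg (eN_nonneg v)]; exact hb
    have hβ0 : β ≠ 0 := by intro e; rw [e] at hnβ; simp at hnβ
    refine ⟨ζ * α * β⁻¹, by rw [norm_mul, norm_mul, norm_inv, hζ, hnα, hnβ]; norm_num, ?_⟩
    have key : ζ • a • u - b • v = β • ((ζ * α * β⁻¹) • unit u - unit v) := by
      rw [hau, hbv, smul_sub]
      simp only [smul_smul]
      congr 2
      field_simp
    rw [key, eN_smul, hnβ, one_mul]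
  · rintro ⟨ζ, hζ, rfl⟩
    refine ⟨(((eN u)⁻¹ : ℝ) : 𝕜), (((eN v)⁻¹ : ℝ) : 𝕜), ζ, ?_, ?_, hζ, ?_⟩
    · rw [← unit_smul_eq]; exact eN_unit hu
    · rw [← unit_smul_eq]; exact eN_unit hv
    · rw [← unit_smul_eq, ← unit_smul_eq]

lemma dP_eq_dset (u v : Fin n → 𝕜) (hu : u ≠ 0) (hv : v ≠ 0) :
    dP u v = sInf (dset u v) := by
  rw [dP, dset_eq u v hu hv]

lemma dset_nonneg {u v : Fin n → 𝕜} : ∀ r ∈ dset u v, (0:ℝ) ≤ r := by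
  rintro r ⟨ζ, hζ, rfl⟩; exact eN_nonneg _
lemma dset_bdd {u v : Fin n → 𝕜} : BddBelow (dset u v) :=
  ⟨0, fun r hr => dset_nonneg r hr⟩
lemma dset_nonempty (u v : Fin n → 𝕜) : (dset u v).Nonempty :=
  ⟨_, 1, norm_one, rfl⟩

lemma dP_le_unit {u v : Fin n → 𝕜} (hu : u ≠ 0) (hv : v ≠ 0) {ζ : 𝕜} (hζ : ‖ζ‖ = 1) :
    dP u v ≤ eN (ζ • unit u - unit v) := by
  rw [dP_eq_dset u v hu hv]
  exact csInf_le dset_bdd ⟨ζ, hζ, rfl⟩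

lemma dP_nonneg (u v : Fin n → 𝕜) : 0 ≤ dP u v := by
  apply Real.sInf_nonneg
  rintro r ⟨a, b, ζ, -, -, -, rfl⟩; exact eN_nonneg _


lemma eN_sq_eq {u v : Fin n → 𝕜} (hu : eN u = 1) (hv : eN v = 1) {ζ : 𝕜} (hζ : ‖ζ‖ = 1) :
    eN (ζ • u - v) ^ 2 =
      2 - 2 * RCLike.re ((starRingEnd 𝕜) ζ * (inner 𝕜 (toE u) (toE v) : 𝕜)) := by
  rw [eN_def, toE_sub, toE_smul, norm_sub_sq (𝕜 := 𝕜), inner_smul_left, norm_smul, hζ]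
  rw [eN_def] at hu hv
  rw [hu, hv]
  ring

lemma re_term_le {u v : Fin n → 𝕜} {ζ : 𝕜} (hζ : ‖ζ‖ = 1) :
    RCLike.re ((starRingEnd 𝕜) ζ * (inner 𝕜 (toE u) (toE v) : 𝕜)) ≤
      ‖(inner 𝕜 (toE u) (toE v) : 𝕜)‖ := by
  calc RCLike.re ((starRingEnd 𝕜) ζ * (inner 𝕜 (toE u) (toE v) : 𝕜))
      ≤ ‖(starRingEnd 𝕜) ζ * (inner 𝕜 (toE u) (toE v) : 𝕜)‖ := RCLike.re_le_norm _
    _ = ‖(inner 𝕜 (toE u) (toE v) : 𝕜)‖ := by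
        rw [norm_mul, RCLike.norm_conj, hζ, one_mul]

lemma dP_attain {u v : Fin n → 𝕜} (hu : u ≠ 0) (hv : v ≠ 0) :
    ∃ ζ : 𝕜, ‖ζ‖ = 1 ∧ dP u v = eN (ζ • unit u - unit v) := by
  set c : 𝕜 := (inner 𝕜 (toE (unit u)) (toE (unit v)) : 𝕜) with hc
  have hnu : eN (unit u) = 1 := eN_unit hu
  have hnv : eN (unit v) = 1 := eN_unit hv
  by_cases h0 : c = 0
  · refine ⟨1, norm_one, le_antisymm (dP_le_unit hu hv norm_one) ?_⟩
    rw [dP_eq_dset u v hu hv]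
    apply le_csInf (dset_nonempty u v)
    rintro r ⟨ζ, hζ, rfl⟩
    have e1 : eN ((1:𝕜) • unit u - unit v) ^ 2 = 2 - 2 * RCLike.re ((starRingEnd 𝕜) (1:𝕜) * c) :=
      eN_sq_eq hnu hnv norm_one
    have e2 : eN (ζ • unit u - unit v) ^ 2 = 2 - 2 * RCLike.re ((starRingEnd 𝕜) ζ * c) :=
      eN_sq_eq hnu hnv hζ
    have heq : eN ((1:𝕜) • unit u - unit v) ^ 2 = eN (ζ • unit u - unit v) ^ 2 := by
      rw [e1, e2, h0]; simp
    have h3 := congrArg Real.sqrt heq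
    rw [Real.sqrt_sq (eN_nonneg _), Real.sqrt_sq (eN_nonneg _)] at h3
    exact le_of_eq h3
  · set ζ0 : 𝕜 := c / ((‖c‖ : ℝ) : 𝕜) with hζ0def
    have hnc : (0:ℝ) < ‖c‖ := norm_pos_iff.mpr h0
    have hζ0 : ‖ζ0‖ = 1 := by
      rw [hζ0def, norm_div, RCLike.norm_ofReal, abs_of_nonneg (norm_nonneg _),
        div_self (ne_of_gt hnc)]
    have hre0 : RCLike.re ((starRingEnd 𝕜) ζ0 * c) = ‖c‖ := by
      have : (starRingEnd 𝕜) ζ0 * c = ((‖c‖ : ℝ) : 𝕜) := by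
        rw [hζ0def, map_div₀, RCLike.conj_ofReal, div_mul_eq_mul_div, RCLike.conj_mul]
        rw [div_eq_iff (by simpa using ne_of_gt hnc)]
        push_cast
        ring
      rw [this, RCLike.ofReal_re]
    refine ⟨ζ0, hζ0, le_antisymm (dP_le_unit hu hv hζ0) ?_⟩
    rw [dP_eq_dset u v hu hv]
    apply le_csInf (dset_nonempty u v)
    rintro r ⟨ζ, hζ, rfl⟩
    have e1 := eN_sq_eq (𝕜 := 𝕜) hnu hnv hζ0
    have e2 := eN_sq_eq (𝕜 := 𝕜) hnu hnv hζ
    have hsq : eN (ζ0 • unit u - unit v) ^ 2 ≤ eN (ζ • unit u - unit v) ^ 2 := by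
      rw [e1, e2, hre0]
      have := re_term_le (u := unit u) (v := unit v) hζ
      rw [← hc] at this
      linarith
    have h3 := Real.sqrt_le_sqrt hsq
    rwa [Real.sqrt_sq (eN_nonneg _), Real.sqrt_sq (eN_nonneg _)] at h3

lemma dP_swap_mem (u v : Fin n → 𝕜) (r : ℝ)
    (hr : r ∈ {r : ℝ | ∃ a b ζ : 𝕜, eN (a • u) = 1 ∧ eN (b • v) = 1 ∧ ‖ζ‖ = 1 ∧
      r = eN (ζ • a • u - b • v)}) :
    r ∈ {r : ℝ | ∃ a b ζ : 𝕜, eN (a • v) = 1 ∧ eN (b • u) = 1 ∧ ‖ζ‖ = 1 ∧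
      r = eN (ζ • a • v - b • u)} := by
  obtain ⟨a, b, ζ, ha, hb, hζ, rfl⟩ := hr
  have hζne : ζ ≠ 0 := by intro e; rw [e] at hζ; simp at hζ
  refine ⟨b, a, ζ⁻¹, hb, ha, by rw [norm_inv, hζ]; norm_num, ?_⟩
  have key : ζ⁻¹ • b • v - a • u = (-ζ⁻¹) • (ζ • a • u - b • v) := by
    rw [smul_sub, smul_smul, smul_smul, neg_mul, inv_mul_cancel₀ hζne]
    module
  rw [key, eN_smul, norm_neg, norm_inv, hζ]
  norm_num

lemma dP_symm (u v : Fin n → 𝕜) : dP u v = dP v u := by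
  unfold dP
  congr 1
  ext r
  exact ⟨dP_swap_mem u v r, dP_swap_mem v u r⟩

lemma dP_smul_left {c : 𝕜} (hc : c ≠ 0) (u v : Fin n → 𝕜) : dP (c • u) v = dP u v := by
  unfold dP
  congr 1
  ext r
  constructor
  · rintro ⟨a, b, ζ, ha, hb, hζ, rfl⟩
    exact ⟨a * c, b, ζ, by rwa [mul_smul], hb, hζ, by rw [mul_smul]⟩
  · rintro ⟨a, b, ζ, ha, hb, hζ, rfl⟩
    have key : (a * c⁻¹) • c • u = a • u := by
      rw [smul_smul, mul_assoc, inv_mul_cancel₀ hc, mul_one]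
    refine ⟨a * c⁻¹, b, ζ, by rwa [key], hb, hζ, by rw [key]⟩

lemma dP_smul_right {c : 𝕜} (hc : c ≠ 0) (u v : Fin n → 𝕜) : dP u (c • v) = dP u v := by
  rw [dP_symm, dP_smul_left hc, dP_symm]

lemma dP_triangle (a b c : Fin n → 𝕜) (ha : a ≠ 0) (hb : b ≠ 0) (hc : c ≠ 0) :
    dP a c ≤ dP a b + dP b c := by
  obtain ⟨ζ₁, hζ₁, e₁⟩ := dP_attain ha hb
  obtain ⟨ζ₂, hζ₂, e₂⟩ := dP_attain hb hc
  have hζ : ‖ζ₂ * ζ₁‖ = 1 := by rw [norm_mul, hζ₁, hζ₂, one_mul]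
  calc dP a c ≤ eN ((ζ₂ * ζ₁) • unit a - unit c) := dP_le_unit ha hc hζ
    _ ≤ eN (ζ₂ • (ζ₁ • unit a - unit b)) + eN (ζ₂ • unit b - unit c) := by
        have : (ζ₂ * ζ₁) • unit a - unit c =
            (ζ₂ • (ζ₁ • unit a - unit b)) + (ζ₂ • unit b - unit c) := by
          rw [smul_sub, mul_smul]; abel
        rw [this]; exact eN_add_le _ _
    _ = dP a b + dP b c := by rw [eN_smul, hζ₂, one_mul, ← e₁, ← e₂]

lemma toE_unit (v : Fin n → 𝕜) : toE (unit v) = ((eN v)⁻¹ : ℝ) • toE v := rfl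

lemma dP_le_two_mul {u v : Fin n → 𝕜} (hu : u ≠ 0) (hv : v ≠ 0) :
    dP u v ≤ 2 * eN (u - v) / eN u := by
  have h1 : dP u v ≤ eN ((1:𝕜) • unit u - unit v) := dP_le_unit hu hv norm_one
  rw [one_smul] at h1
  refine h1.trans ?_
  have g1 : eN (unit u - unit v) =
      ‖(‖toE u‖⁻¹ : ℝ) • toE u - (‖toE v‖⁻¹ : ℝ) • toE v‖ := by
    rw [eN_def, toE_sub, toE_unit, toE_unit, eN_def, eN_def]
  have g2 : eN (u - v) = ‖toE u - toE v‖ := by rw [eN_def, toE_sub]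
  rw [g1, g2, eN_def]
  set x := toE u with hx
  set y := toE v with hy
  have hxn : (0:ℝ) < ‖x‖ := by
    rw [← eN_def]; exact eN_pos hu
  have hyn : (0:ℝ) < ‖y‖ := by
    rw [← eN_def]; exact eN_pos hv
  have key : (‖x‖⁻¹ : ℝ) • x - (‖y‖⁻¹ : ℝ) • y =
      (‖x‖⁻¹ : ℝ) • (x - y) + ((‖x‖⁻¹ : ℝ) - (‖y‖⁻¹ : ℝ)) • y := by
    rw [smul_sub, sub_smul]; abel
  rw [key]
  calc ‖(‖x‖⁻¹ : ℝ) • (x - y) + ((‖x‖⁻¹ : ℝ) - (‖y‖⁻¹ : ℝ)) • y‖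
      ≤ ‖(‖x‖⁻¹ : ℝ) • (x - y)‖ + ‖((‖x‖⁻¹ : ℝ) - (‖y‖⁻¹ : ℝ)) • y‖ := norm_add_le _ _
    _ = ‖x - y‖ / ‖x‖ + |‖x‖⁻¹ - ‖y‖⁻¹| * ‖y‖ := by
        rw [norm_smul, norm_smul, Real.norm_eq_abs, Real.norm_eq_abs,
          abs_of_nonneg (inv_nonneg.mpr (le_of_lt hxn))]
        ring_nf
    _ ≤ ‖x - y‖ / ‖x‖ + ‖x - y‖ / ‖x‖ := by
        have e0 : ‖x‖⁻¹ - ‖y‖⁻¹ = (‖y‖ - ‖x‖) / (‖x‖ * ‖y‖) := by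
          field_simp [hxn.ne', hyn.ne']
        have e : |‖x‖⁻¹ - ‖y‖⁻¹| * ‖y‖ = |‖y‖ - ‖x‖| / ‖x‖ := by
          rw [e0, abs_div, abs_of_pos (mul_pos hxn hyn)]
          field_simp [hxn.ne', hyn.ne']
        rw [e]
        have h2 : |‖y‖ - ‖x‖| ≤ ‖x - y‖ := by
          rw [abs_sub_comm]
          exact (abs_norm_sub_norm_le x y)
        gcongr
    _ = 2 * ‖x - y‖ / ‖x‖ := by ring


-- ### opN lemmas
lemma opN_nonneg (A : Matrix (Fin n) (Fin n) 𝕜) : 0 ≤ opN A :=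
  Real.sInf_nonneg (fun _ hc => hc.1)

lemma opN_set_nonempty (A : Matrix (Fin n) (Fin n) 𝕜) :
    {c : ℝ | 0 ≤ c ∧ ∀ v : Fin n → 𝕜, eN (A.mulVec v) ≤ c * eN v}.Nonempty := by
  classical
  let T : EuclideanSpace 𝕜 (Fin n) →L[𝕜] EuclideanSpace 𝕜 (Fin n) :=
    LinearMap.toContinuousLinearMap (Matrix.toEuclideanLin A)
  refine ⟨‖T‖, norm_nonneg _, fun v => ?_⟩
  have e : toE (A.mulVec v) = T (toE v) := rfl
  rw [eN_def, eN_def, e]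
  exact T.le_opNorm _

lemma eN_mulVec_le (A : Matrix (Fin n) (Fin n) 𝕜) (v : Fin n → 𝕜) :
    eN (A.mulVec v) ≤ opN A * eN v := by
  rcases eq_or_ne v 0 with rfl | hv
  · rw [Matrix.mulVec_zero]
    simp [eN_zero, opN_nonneg A]
  · have hpos := eN_pos hv
    have hdiv : eN (A.mulVec v) / eN v ≤ opN A := by
      apply le_csInf (opN_set_nonempty A)
      rintro c ⟨hc0, hc⟩
      rw [div_le_iff₀ hpos]
      exact hc v
    calc eN (A.mulVec v) = eN (A.mulVec v) / eN v * eN v := by field_simp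
      _ ≤ opN A * eN v := mul_le_mul_of_nonneg_right hdiv (eN_nonneg v)

lemma eN_mulVec_le_of_opN_le {A : Matrix (Fin n) (Fin n) 𝕜} {M : ℝ} (hA : opN A ≤ M)
    (v : Fin n → 𝕜) : eN (A.mulVec v) ≤ M * eN v :=
  (eN_mulVec_le A v).trans (by gcongr; exact eN_nonneg v)

-- ### distPS lemmas
lemma distPS_nonneg (u : Fin n → 𝕜) (W : Submodule 𝕜 (Fin n → 𝕜)) : 0 ≤ distPS u W :=
  Real.sInf_nonneg (by rintro r ⟨w, -, -, rfl⟩; exact dP_nonneg u w)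

lemma distPS_le {u w : Fin n → 𝕜} {W : Submodule 𝕜 (Fin n → 𝕜)}
    (hw : w ∈ W) (hw0 : w ≠ 0) : distPS u W ≤ dP u w :=
  csInf_le ⟨0, by rintro r ⟨w', -, -, rfl⟩; exact dP_nonneg u w'⟩ ⟨w, hw, hw0, rfl⟩

lemma le_distPS {u : Fin n → 𝕜} {W : Submodule 𝕜 (Fin n → 𝕜)} {r : ℝ}
    (hne : ∃ w ∈ W, w ≠ 0) (H : ∀ w ∈ W, w ≠ 0 → r ≤ dP u w) : r ≤ distPS u W := by
  apply le_csInf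
  · obtain ⟨w, hw, hw0⟩ := hne; exact ⟨_, w, hw, hw0, rfl⟩
  · rintro b ⟨w, hw, hw0, rfl⟩; exact H w hw hw0

lemma exists_of_distPS_lt {u : Fin n → 𝕜} {W : Submodule 𝕜 (Fin n → 𝕜)} {r : ℝ}
    (hne : ∃ w ∈ W, w ≠ 0) (H : distPS u W < r) : ∃ w ∈ W, w ≠ 0 ∧ dP u w < r := by
  obtain ⟨w0, hw0, hw00⟩ := hne
  obtain ⟨b, ⟨w, hw, hw0', rfl⟩, hb⟩ :=
    exists_lt_of_csInf_lt (s := {r : ℝ | ∃ w : Fin n → 𝕜, w ∈ W ∧ w ≠ 0 ∧ r = dP u w})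
      ⟨_, w0, hw0, hw00, rfl⟩ H
  exact ⟨w, hw, hw0', hb⟩

-- ### coordinate lemmas
lemma norm_coord_le (v : Fin n → 𝕜) (i : Fin n) : ‖v i‖ ≤ eN v := by
  rw [eN]
  have h1 : ‖v i‖ = Real.sqrt (‖v i‖ ^ 2) := (Real.sqrt_sq (norm_nonneg _)).symm
  rw [h1]
  apply Real.sqrt_le_sqrt
  exact Finset.single_le_sum (f := fun j => ‖v j‖ ^ 2) (fun j _ => by positivity) (Finset.mem_univ i)

lemma eN_single (i : Fin n) (a : 𝕜) : eN (Pi.single i a) = ‖a‖ := by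
  classical
  rw [eN]
  have : ∀ j, ‖(Pi.single i a : Fin n → 𝕜) j‖ ^ 2 = if j = i then ‖a‖ ^ 2 else 0 := by
    intro j
    by_cases hj : j = i
    · subst hj; rw [Pi.single_eq_same, if_pos rfl]
    · rw [Pi.single_eq_of_ne hj, if_neg hj, norm_zero]; ring
  simp only [this]
  rw [Finset.sum_ite_eq' Finset.univ i (fun _ => ‖a‖ ^ 2), if_pos (Finset.mem_univ i),
    Real.sqrt_sq (norm_nonneg a)]

lemma eN_le_of_coord {u v : Fin n → 𝕜} (H : ∀ i, ‖u i‖ ≤ ‖v i‖) : eN u ≤ eN v := by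
  rw [eN, eN]
  apply Real.sqrt_le_sqrt
  apply Finset.sum_le_sum
  intro i _
  have := H i
  have h0 : (0:ℝ) ≤ ‖u i‖ := norm_nonneg _
  nlinarith



lemma ofReal_eN_ne_zero' {v : Fin n → 𝕜} (hv : v ≠ 0) : ((((eN v)⁻¹ : ℝ)) : 𝕜) ≠ 0 := by
  simp [ne_of_gt (eN_pos hv)]


lemma eN_add_ge (u v : Fin n → 𝕜) : eN u - eN v ≤ eN (u + v) := by
  have h := eN_add_le (u + v) (-v)
  rw [add_neg_cancel_right, eN_neg] at h
  linarith

-- ### matrix helpers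
lemma inv_mulVec_mulVec (h : (Matrix (Fin n) (Fin n) 𝕜)ˣ) (v : Fin n → 𝕜) :
    ((h⁻¹ : _) : Matrix (Fin n) (Fin n) 𝕜).mulVec ((h : Matrix (Fin n) (Fin n) 𝕜).mulVec v) = v := by
  rw [Matrix.mulVec_mulVec, Units.inv_mul, Matrix.one_mulVec]

lemma mulVec_inv_mulVec (h : (Matrix (Fin n) (Fin n) 𝕜)ˣ) (v : Fin n → 𝕜) :
    (h : Matrix (Fin n) (Fin n) 𝕜).mulVec (((h⁻¹ : _) : Matrix (Fin n) (Fin n) 𝕜).mulVec v) = v := by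
  rw [Matrix.mulVec_mulVec, Units.mul_inv, Matrix.one_mulVec]

lemma mulVec_ne_zero (h : (Matrix (Fin n) (Fin n) 𝕜)ˣ) {v : Fin n → 𝕜} (hv : v ≠ 0) :
    (h : Matrix (Fin n) (Fin n) 𝕜).mulVec v ≠ 0 := by
  intro e
  apply hv
  have := congrArg (((h⁻¹ : _) : Matrix (Fin n) (Fin n) 𝕜).mulVec) e
  rwa [inv_mulVec_mulVec, Matrix.mulVec_zero] at this

lemma inv_mulVec_ne_zero (h : (Matrix (Fin n) (Fin n) 𝕜)ˣ) {v : Fin n → 𝕜} (hv : v ≠ 0) :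
    ((h⁻¹ : _) : Matrix (Fin n) (Fin n) 𝕜).mulVec v ≠ 0 := by
  intro e
  apply hv
  have := congrArg ((h : Matrix (Fin n) (Fin n) 𝕜).mulVec) e
  rwa [mulVec_inv_mulVec, Matrix.mulVec_zero] at this

lemma conj_pow' (h : (Matrix (Fin n) (Fin n) 𝕜)ˣ) (D : Matrix (Fin n) (Fin n) 𝕜) (s : ℕ) :
    ((h : Matrix (Fin n) (Fin n) 𝕜) * D * ((h⁻¹ : _) : Matrix (Fin n) (Fin n) 𝕜)) ^ s =
      (h : Matrix (Fin n) (Fin n) 𝕜) * D ^ s * ((h⁻¹ : _) : Matrix (Fin n) (Fin n) 𝕜) := by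
  induction s with
  | zero => rw [pow_zero, pow_zero, Matrix.mul_one]; exact (Units.mul_inv h).symm
  | succ k ih =>
      rw [pow_succ, pow_succ, ih]
      calc (h : Matrix (Fin n) (Fin n) 𝕜) * D ^ k * ((h⁻¹ : _) : Matrix (Fin n) (Fin n) 𝕜) *
            ((h : Matrix (Fin n) (Fin n) 𝕜) * D * ((h⁻¹ : _) : Matrix (Fin n) (Fin n) 𝕜))
          = (h : Matrix (Fin n) (Fin n) 𝕜) * D ^ k *
            (((h⁻¹ : _) : Matrix (Fin n) (Fin n) 𝕜) * (h : Matrix (Fin n) (Fin n) 𝕜)) *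
            (D * ((h⁻¹ : _) : Matrix (Fin n) (Fin n) 𝕜)) := by
            simp only [Matrix.mul_assoc]
        _ = (h : Matrix (Fin n) (Fin n) 𝕜) * (D ^ k * D) * ((h⁻¹ : _) : Matrix (Fin n) (Fin n) 𝕜) := by
            rw [Units.inv_mul, Matrix.mul_one]
            simp only [Matrix.mul_assoc]

lemma unit_of_eN_one {u : Fin n → 𝕜} (hu : eN u = 1) : unit u = u := by
  rw [unit, hu, inv_one, one_smul]

lemma unit_ne_zero {u : Fin n → 𝕜} (hu : u ≠ 0) : unit u ≠ 0 := by
  intro e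
  have := eN_unit hu
  rw [e, eN_zero] at this
  norm_num at this

lemma dP_unit_left {u v : Fin n → 𝕜} (hu : u ≠ 0) : dP (unit u) v = dP u v := by
  rw [unit_smul_eq, dP_smul_left (ofReal_eN_ne_zero' hu)]

lemma dP_unit_right {u v : Fin n → 𝕜} (hv : v ≠ 0) : dP u (unit v) = dP u v := by
  rw [unit_smul_eq, dP_smul_right (ofReal_eN_ne_zero' hv)]


end S11

lemma numeric1 {ε M : ℝ} (hε0 : 0 < ε) (hε1 : ε ≤ 1) (hM : 1 ≤ M) :
    20*M^4*(ε^(12:ℕ)/((10*M)^(12:ℕ)))/ε ≤ ε^11 := by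
  have hMpos : (0:ℝ) < M := lt_of_lt_of_le zero_lt_one hM
  have h10M : (0:ℝ) < (10*M)^(12:ℕ) := by positivity
  have hM412 : M^(4:ℕ) ≤ M^(12:ℕ) := pow_le_pow_right₀ hM (by norm_num)
  rw [div_le_iff₀ hε0, ← pow_succ]
  have key : 20*M^4*ε^(12:ℕ) ≤ ε^(12:ℕ)*((10*M)^(12:ℕ)) := by
    rw [mul_pow]
    nlinarith [pow_nonneg hε0.le 12, pow_nonneg hMpos.le 12, pow_pos hMpos 12,
      mul_nonneg (sub_nonneg.mpr hM412) (pow_nonneg hε0.le 12)]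
  calc 20*M^4*(ε^(12:ℕ)/((10*M)^(12:ℕ)))
      = (20*M^4*ε^(12:ℕ))/((10*M)^(12:ℕ)) := by ring
    _ ≤ (ε^(12:ℕ)*((10*M)^(12:ℕ)))/((10*M)^(12:ℕ)) :=
        div_le_div₀ (by positivity) key h10M le_rfl
    _ = ε^(12:ℕ) := by field_simp

lemma numeric2 {ε M : ℝ} (hε0 : 0 < ε) (hε1 : ε ≤ 1) (hM : 1 ≤ M) :
    M^2*(ε^(12:ℕ)/((10*M)^(12:ℕ))) ≤ ε/(10*M^2) := by
  have hMpos : (0:ℝ) < M := lt_of_lt_of_le zero_lt_one hM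
  have h10M : (0:ℝ) < (10*M)^(12:ℕ) := by positivity
  have hM412 : M^(4:ℕ) ≤ M^(12:ℕ) := pow_le_pow_right₀ hM (by norm_num)
  have g2 : M^2*(ε^(12:ℕ)/((10*M)^(12:ℕ))) = (M^2*ε^(12:ℕ))/((10*M)^(12:ℕ)) := by ring
  rw [g2, div_le_div_iff₀ h10M (by positivity)]
  have e12 : ε^(12:ℕ) ≤ ε := pow_le_of_le_one hε0.le hε1 (by norm_num)
  have hmp : (10*M)^(12:ℕ) = 10^(12:ℕ)*M^(12:ℕ) := mul_pow 10 M 12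
  rw [hmp]
  nlinarith [mul_le_mul hM412 e12 (pow_nonneg hε0.le 12) (pow_nonneg hMpos.le 12),
    mul_nonneg (pow_nonneg hMpos.le 12) hε0.le]

lemma numeric3 {ε M : ℝ} (hε0 : 0 < ε) (hε1 : ε ≤ 1) (hM : 1 ≤ M) :
    (ε/(10*M))^(6:ℕ) ≤ ε^2/(40*M^6) := by
  have hMpos : (0:ℝ) < M := lt_of_lt_of_le zero_lt_one hM
  rw [div_pow, div_le_div_iff₀ (by positivity) (by positivity)]
  have e6 : ε^(6:ℕ) ≤ ε^(2:ℕ) := pow_le_pow_of_le_one hε0.le hε1 (by norm_num)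
  have hmp : (10*M)^(6:ℕ) = 10^(6:ℕ)*M^(6:ℕ) := mul_pow 10 M 6
  rw [hmp]
  nlinarith [mul_le_mul e6 (le_refl (M^(6:ℕ))) (by positivity) (pow_nonneg hε0.le 2),
    mul_nonneg (pow_nonneg hε0.le 2) (pow_nonneg hMpos.le 6)]

lemma numeric4 {ε M : ℝ} (hε0 : 0 < ε) (hε1 : ε ≤ 1) (hM : 1 ≤ M) :
    20*M^3/(9*ε) + M ≤ 4*M^3/ε := by
  have hM0 : (0:ℝ) < M := lt_of_lt_of_le zero_lt_one hM
  have h1 : M ≤ M^3/ε := by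
    rw [le_div_iff₀ hε0]
    have a1 : M*ε ≤ M := by nlinarith
    have a2 : (1:ℝ) ≤ M^2 := by nlinarith
    have a3 : M ≤ M^3 := by nlinarith [mul_le_mul_of_nonneg_left a2 hM0.le]
    linarith
  have h2 : 20*M^3/(9*ε) = (20/9)*(M^3/ε) := by
    field_simp
  have h3 : 4*M^3/ε = 4*(M^3/ε) := by ring
  rw [h2, h3]
  linarith


open S11 in
set_option maxHeartbeats 1000000 in
/-- attraction estimate for powers of a strongly proximal matrix
`w = h·diag(κ)·h⁻¹`: on points `x'` at distance `≥ ε` from a repelling hyperplane,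
`w^s` is `(max_{i≥2}|κ_i|/|κ_1|)^{s/2}`-Lipschitz on `B_θ(x')` and maps it into the
`ε^{11}`-ball around `[h e_1]`. -/
theorem stmt11 {𝕜 : Type*} [RCLike 𝕜] (n : ℕ) (hn : 2 ≤ n)
    (ε M : ℝ) (hε0 : 0 < ε) (hε1 : ε ≤ 1) (hM : 1 ≤ M)
    (x : Fin n → 𝕜) (hx : eN x = 1)
    (V : Submodule 𝕜 (Fin n → 𝕜)) (hVrk : Module.finrank 𝕜 V = n - 1)
    (h : (Matrix (Fin n) (Fin n) 𝕜)ˣ) (κ : Fin n → 𝕜) (hκ0 : ∀ i, κ i ≠ 0)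
    (hh : opN (h : Matrix (Fin n) (Fin n) 𝕜) ≤ M)
    (hh' : opN ((h⁻¹ : _) : Matrix (Fin n) (Fin n) 𝕜) ≤ M)
    (hhe1 : dP ((h : Matrix (Fin n) (Fin n) 𝕜).mulVec (Pi.single ⟨0, by omega⟩ 1)) x ≤ ε / 10)
    (hplane : ∀ u ∈ (LinearMap.ker
        (LinearMap.proj (⟨0, by omega⟩ : Fin n) : (Fin n → 𝕜) →ₗ[𝕜] 𝕜)).map
          (Matrix.mulVecLin (h : Matrix (Fin n) (Fin n) 𝕜)),
      u ≠ 0 → distPS u V < ε / 10)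
    (hκ : ∀ i : Fin n, i ≠ ⟨0, by omega⟩ →
      (10 * M / ε) ^ (12 : ℕ) * ‖κ i‖ ≤ ‖κ ⟨0, by omega⟩‖)
    (w : Matrix (Fin n) (Fin n) 𝕜)
    (hw : w = (h : Matrix (Fin n) (Fin n) 𝕜) * Matrix.diagonal κ *
      ((h⁻¹ : _) : Matrix (Fin n) (Fin n) 𝕜)) :
    ∀ x' : Fin n → 𝕜, x' ≠ 0 → ε ≤ distPS x' V →
      ∀ θ : ℝ, 0 < θ → θ < ε / 2 →
        ∀ s : ℕ, 1 ≤ s →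
          ∀ x'' : Fin n → 𝕜, x'' ≠ 0 → dP x'' x' ≤ θ →
            dP ((w ^ s).mulVec x'') ((w ^ s).mulVec x') ≤
                θ * (((⨆ i : {i : Fin n // i ≠ ⟨0, by omega⟩}, ‖κ (i : Fin n)‖) /
                  ‖κ (⟨0, by omega⟩ : Fin n)‖) ^ ((s : ℝ) / 2)) ∧
              dP ((w ^ s).mulVec x'')
                ((h : Matrix (Fin n) (Fin n) 𝕜).mulVec (Pi.single ⟨0, by omega⟩ 1)) ≤
                  ε ^ 11 := by
  intro x' hx'0 hx'V θ hθ0 hθε s hs x'' hx''0 hx''θ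
  have hn0 : 0 < n := by omega
  set i0 : Fin n := ⟨0, by omega⟩ with hi0def
  set H : Matrix (Fin n) (Fin n) 𝕜 := (h : Matrix (Fin n) (Fin n) 𝕜) with hHdef
  set H' : Matrix (Fin n) (Fin n) 𝕜 := ((h⁻¹ : _) : Matrix (Fin n) (Fin n) 𝕜) with hH'def
  set e1 : Fin n → 𝕜 := Pi.single i0 1 with he1def
  set K : Submodule 𝕜 (Fin n → 𝕜) :=
    LinearMap.ker (LinearMap.proj i0 : (Fin n → 𝕜) →ₗ[𝕜] 𝕜) with hKdef
  set W : Submodule 𝕜 (Fin n → 𝕜) := K.map (Matrix.mulVecLin H) with hWdef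
  -- basics
  have hi1 : (⟨1, by omega⟩ : Fin n) ≠ i0 := by
    rw [hi0def]; intro e; simpa using congrArg Fin.val e
  haveI : Nonempty {i : Fin n // i ≠ i0} := ⟨⟨⟨1, by omega⟩, hi1⟩⟩
  set κm : ℝ := ⨆ i : {i : Fin n // i ≠ i0}, ‖κ (i : Fin n)‖ with hκmdef
  have hκm_ge : ∀ i : Fin n, i ≠ i0 → ‖κ i‖ ≤ κm := by
    intro i hi
    exact le_ciSup (f := fun j : {j : Fin n // j ≠ i0} => ‖κ (j : Fin n)‖)
      (Set.Finite.bddAbove (Set.finite_range _)) ⟨i, hi⟩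
  have hκm_pos : 0 < κm := by
    have h1 : (0:ℝ) < ‖κ (⟨1, by omega⟩ : Fin n)‖ := norm_pos_iff.mpr (hκ0 _)
    exact lt_of_lt_of_le h1 (hκm_ge _ hi1)
  have hκ0pos : (0:ℝ) < ‖κ i0‖ := norm_pos_iff.mpr (hκ0 i0)
  set ρ : ℝ := κm / ‖κ i0‖ with hρdef
  have hρpos : 0 < ρ := div_pos hκm_pos hκ0pos
  have hβpos : (0:ℝ) < ε / (10 * M) := by positivity
  have hβle : ε / (10 * M) ≤ 1 / 10 := by
    rw [div_le_div_iff₀ (by positivity) (by norm_num)]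
    nlinarith
  have hρle : ρ ≤ (ε / (10 * M)) ^ (12:ℕ) := by
    rw [hρdef, div_le_iff₀ hκ0pos]
    have h1 : κm ≤ ‖κ i0‖ * (ε / (10 * M)) ^ (12:ℕ) := by
      apply ciSup_le
      rintro ⟨i, hi⟩
      have h2 := hκ i hi
      have h3 : (0:ℝ) < (10 * M / ε) ^ (12:ℕ) := by positivity
      have h4 : ‖κ i‖ ≤ ‖κ i0‖ / (10 * M / ε) ^ (12:ℕ) := by
        rw [le_div_iff₀ h3]
        linarith [h2]
      refine h4.trans (le_of_eq ?_)
      rw [div_pow, div_pow]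
      field_simp

    linarith
  have hρ1 : ρ ≤ 1 / 10 ^ (12:ℕ) := by
    refine hρle.trans ?_
    calc (ε / (10 * M)) ^ (12:ℕ) ≤ (1/10 : ℝ) ^ (12:ℕ) := by
          exact pow_le_pow_left₀ (le_of_lt hβpos) hβle 12
      _ = 1 / 10 ^ (12:ℕ) := by norm_num
  have hρlt1 : ρ < 1 := by
    refine lt_of_le_of_lt hρ1 ?_; norm_num
  -- norms of H, H'
  have hHle : ∀ v : Fin n → 𝕜, eN (H.mulVec v) ≤ M * eN v := eN_mulVec_le_of_opN_le hh
  have hH'le : ∀ v : Fin n → 𝕜, eN (H'.mulVec v) ≤ M * eN v := eN_mulVec_le_of_opN_le hh'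
  have hHge : ∀ v : Fin n → 𝕜, eN v ≤ M * eN (H.mulVec v) := by
    intro v
    have := hH'le (H.mulVec v)
    rwa [hH'def, hHdef, inv_mulVec_mulVec] at this
  have hH'ge : ∀ v : Fin n → 𝕜, eN v ≤ M * eN (H'.mulVec v) := by
    intro v
    have := hHle (H'.mulVec v)
    rwa [hH'def, hHdef, mulVec_inv_mulVec] at this
  -- nonzero elements of V and W
  have hVne : ∃ v ∈ V, v ≠ 0 := by
    have hne : V ≠ ⊥ := by
      intro e
      rw [e, finrank_bot] at hVrk
      omega
    obtain ⟨v, hv, hv0⟩ := Submodule.exists_mem_ne_zero_of_ne_bot hne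
    exact ⟨v, hv, hv0⟩
  have hWne : ∃ u ∈ W, u ≠ 0 := by
    refine ⟨H.mulVec (Pi.single ⟨1, by omega⟩ 1), ?_, ?_⟩
    · rw [hWdef]
      refine ⟨Pi.single ⟨1, by omega⟩ 1, ?_, rfl⟩
      show (Pi.single (⟨1, by omega⟩ : Fin n) 1 : Fin n → 𝕜) ∈ K
      rw [hKdef, LinearMap.mem_ker]
      show (Pi.single (⟨1, by omega⟩ : Fin n) 1 : Fin n → 𝕜) i0 = 0
      exact Pi.single_eq_of_ne (Ne.symm hi1) 1
    · apply mulVec_ne_zero h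
      intro e
      have := congrFun e ⟨1, by omega⟩
      simp [Pi.single_eq_same] at this
  -- STEP 1: x' is far from W
  have hx'W : ∀ u ∈ W, u ≠ 0 → 9 * ε / 10 ≤ dP x' u := by
    intro u hu hu0
    obtain ⟨v, hvV, hv0, hdv⟩ := exists_of_distPS_lt hVne (hplane u hu hu0)
    have h2 : ε ≤ dP x' v := le_trans hx'V (distPS_le hvV hv0)
    have h3 : dP x' v ≤ dP x' u + dP u v := dP_triangle x' u v hx'0 hu0 hv0
    linarith
  -- STEP 2: x'' is far from W
  have hx''W : ∀ u ∈ W, u ≠ 0 → 2 * ε / 5 ≤ dP x'' u := by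
    intro u hu hu0
    have h3 : dP x' u ≤ dP x' x'' + dP x'' u := dP_triangle x' x'' u hx'0 hx''0 hu0
    have h4 : dP x' x'' = dP x'' x' := dP_symm x' x''
    have h5 := hx'W u hu hu0
    linarith
  -- STEP 3: coordinate lower bound
  have coordLB : ∀ (u : Fin n → 𝕜), u ≠ 0 → ∀ δ : ℝ, 0 < δ → δ ≤ 2 →
      (∀ p ∈ W, p ≠ 0 → δ ≤ dP u p) → δ * eN u / (2 * M) ≤ ‖(H'.mulVec u) i0‖ := by
    intro u hu δ hδ0 hδ2 hdist
    set y : Fin n → 𝕜 := H'.mulVec u with hydef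
    have hyu : H.mulVec y = u := by
      rw [hydef, hH'def, hHdef]
      exact mulVec_inv_mulVec h u
    set z : Fin n → 𝕜 := Function.update y i0 0 with hzdef
    have hz_i0 : z i0 = 0 := Function.update_self i0 0 y
    have hz_ne : ∀ i, i ≠ i0 → z i = y i := fun i hi => Function.update_of_ne hi 0 y
    have hzK : z ∈ K := by
      rw [hKdef, LinearMap.mem_ker]
      exact hz_i0
    have hyz : y - z = (y i0) • e1 := by
      funext i
      by_cases hi : i = i0
      · subst hi
        rw [Pi.sub_apply, hz_i0, sub_zero, Pi.smul_apply, he1def, Pi.single_eq_same,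
          smul_eq_mul, mul_one]
      · rw [Pi.sub_apply, hz_ne i hi, sub_self, Pi.smul_apply, he1def,
          Pi.single_eq_of_ne hi, smul_eq_mul, mul_zero]
    have hdecomp : u - H.mulVec z = (y i0) • H.mulVec e1 := by
      rw [← hyu, ← Matrix.mulVec_sub, hyz, Matrix.mulVec_smul]
    have heNe1 : eN e1 = 1 := by rw [he1def, eN_single, norm_one]
    have hepos : 0 < eN u := eN_pos hu
    by_cases hz0 : z = 0
    · have hy_single : y = Pi.single i0 (y i0) := by
        funext i
        by_cases hi : i = i0
        · subst hi; rw [Pi.single_eq_same]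
        · rw [Pi.single_eq_of_ne hi, ← hz_ne i hi, hz0]; rfl
      have h1 : eN y = ‖y i0‖ := by
        conv_lhs => rw [hy_single]
        exact eN_single i0 (y i0)
      have h2 : eN u ≤ M * eN y := by
        conv_lhs => rw [← hyu]
        exact hHle y
      rw [div_le_iff₀ (by positivity)]
      nlinarith [mul_nonneg (sub_nonneg.mpr hδ2) (le_of_lt hepos), eN_nonneg y]
    · have hHz0 : H.mulVec z ≠ 0 := by rw [hHdef]; exact mulVec_ne_zero h hz0
      have hHzW : H.mulVec z ∈ W := by
        rw [hWdef]
        exact ⟨z, hzK, by rw [Matrix.mulVecLin_apply]⟩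
      have h4 : δ ≤ dP u (H.mulVec z) := hdist _ hHzW hHz0
      have h5 : dP u (H.mulVec z) ≤ 2 * eN (u - H.mulVec z) / eN u := dP_le_two_mul hu hHz0
      have h6 : eN (u - H.mulVec z) = ‖y i0‖ * eN (H.mulVec e1) := by
        rw [hdecomp, eN_smul]
      have h7 : eN (H.mulVec e1) ≤ M := by
        have := hHle e1
        rwa [heNe1, mul_one] at this
      rw [div_le_iff₀ (by positivity)]
      have h45 : δ ≤ 2 * eN (u - H.mulVec z) / eN u := h4.trans h5
      have h8 : δ * eN u ≤ 2 * (‖y i0‖ * eN (H.mulVec e1)) := by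
        rw [← h6]
        exact (le_div_iff₀ hepos).mp h45
      have h9 : 2 * (‖y i0‖ * eN (H.mulVec e1)) ≤ ‖y i0‖ * (2 * M) := by
        have h10 := mul_le_mul_of_nonneg_left h7 (norm_nonneg (y i0))
        linarith
      linarith
  -- diagonal power action
  have diagPow : ∀ (y : Fin n → 𝕜) (i : Fin n),
      ((Matrix.diagonal κ) ^ s).mulVec y i = κ i ^ s * y i := by
    intro y i
    rw [Matrix.diagonal_pow, Matrix.mulVec_diagonal, Pi.pow_apply]
  -- powers of w act as H D^s H'
  have wPow : ∀ v : Fin n → 𝕜, (w ^ s).mulVec v =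
      H.mulVec (((Matrix.diagonal κ) ^ s).mulVec (H'.mulVec v)) := by
    intro v
    rw [hw, conj_pow', ← hHdef, ← hH'def, Matrix.mulVec_mulVec, Matrix.mulVec_mulVec,
      Matrix.mul_assoc]
  -- decomposition of D^s y
  have decomp : ∀ y : Fin n → 𝕜,
      ((Matrix.diagonal κ) ^ s).mulVec y =
        (κ i0 ^ s * y i0) • e1 + fun i => κ i ^ s * Function.update y i0 0 i := by
    intro y
    funext i
    by_cases hi : i = i0
    · subst hi
      rw [diagPow]
      simp [he1def, Pi.single_eq_same, Function.update_self]
    · rw [Pi.add_apply, diagPow]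
      simp [he1def, Pi.single_eq_of_ne hi, Function.update_of_ne hi]
  -- tail norm bound
  have tailBound : ∀ y : Fin n → 𝕜,
      eN (fun i => κ i ^ s * Function.update y i0 0 i) ≤ κm ^ s * eN y := by
    intro y
    have h1 : eN (fun i => κ i ^ s * Function.update y i0 0 i) ≤
        eN ((((κm ^ s : ℝ)) : 𝕜) • y) := by
      apply eN_le_of_coord
      intro i
      by_cases hi : i = i0
      · subst hi
        rw [Function.update_self, mul_zero, norm_zero]
        exact norm_nonneg _
      · rw [Function.update_of_ne hi, Pi.smul_apply, smul_eq_mul, norm_mul, norm_mul,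
          norm_pow, RCLike.norm_ofReal, abs_of_nonneg (by positivity)]
        apply mul_le_mul_of_nonneg_right _ (norm_nonneg _)
        exact pow_le_pow_left₀ (norm_nonneg _) (hκm_ge i hi) s
    have h2 : eN ((((κm ^ s : ℝ)) : 𝕜) • y) = κm ^ s * eN y := by
      rw [eN_smul, RCLike.norm_ofReal, abs_of_nonneg (by positivity)]
    rw [h2] at h1
    exact h1
  -- shared facts
  have heNe1 : eN e1 = 1 := by rw [he1def, eN_single, norm_one]
  have he1_0 : e1 ≠ 0 := by
    intro e
    have := congrFun e i0
    rw [he1def] at this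
    simp [Pi.single_eq_same] at this
  have hHe1_0 : H.mulVec e1 ≠ 0 := by rw [hHdef]; exact mulVec_ne_zero h he1_0
  have hHe1_lb : 1/M ≤ eN (H.mulVec e1) := by
    have h1 := hHge e1
    rw [heNe1] at h1
    rw [div_le_iff₀ (by positivity)]
    linarith
  have hHe1_ub : eN (H.mulVec e1) ≤ M := by
    have := hHle e1
    rwa [heNe1, mul_one] at this
  set P : ℝ := ‖κ i0‖ ^ s with hPdef
  have hPpos : 0 < P := by positivity
  have hρs : κm ^ s = ρ ^ s * P := by
    rw [hρdef, div_pow, hPdef, div_mul_cancel₀]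
    positivity
  have hρsρ : ρ ^ s ≤ ρ := by
    calc ρ^s ≤ ρ^1 := pow_le_pow_of_le_one hρpos.le hρlt1.le hs
      _ = ρ := pow_one ρ
  have hβ12 : ρ ≤ ε^(12:ℕ)/((10*M)^(12:ℕ)) := by rw [← div_pow]; exact hρle
  have hρsb : ρ^s ≤ ε^(12:ℕ)/((10*M)^(12:ℕ)) := hρsρ.trans hβ12
  have h10M : (0:ℝ) < (10*M)^(12:ℕ) := by positivity
  have hM412 : M^(4:ℕ) ≤ M^(12:ℕ) := pow_le_pow_right₀ hM (by norm_num)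
  have hMpos : (0:ℝ) < M := lt_of_lt_of_le zero_lt_one hM
  -- ===== CONCLUSION 2 =====
  have con2 : dP ((w ^ s).mulVec x'') (H.mulVec e1) ≤ ε ^ 11 := by
    set y2 : Fin n → 𝕜 := H'.mulVec x'' with hy2def
    set N : ℝ := eN x'' with hNdef
    have hNpos : 0 < N := eN_pos hx''0
    have hc2 : ε * N / (5*M) ≤ ‖y2 i0‖ := by
      have h1 := coordLB x'' hx''0 (2*ε/5) (by positivity) (by linarith) hx''W
      calc ε*N/(5*M) = 2*ε/5 * N/(2*M) := by field_simp
        _ ≤ ‖y2 i0‖ := h1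
    set T2 : Fin n → 𝕜 := fun i => κ i ^ s * Function.update y2 i0 0 i with hT2def
    have hws2 : (w ^ s).mulVec x'' = (κ i0 ^ s * y2 i0) • H.mulVec e1 + H.mulVec T2 := by
      rw [wPow x'', ← hy2def, decomp y2, Matrix.mulVec_add, Matrix.mulVec_smul, ← hT2def]
    have hT2b : eN T2 ≤ κm^s * (M*N) := by
      refine (tailBound y2).trans ?_
      have h2 : eN y2 ≤ M * N := hH'le x''
      have h3 : (0:ℝ) ≤ κm^s := by positivity
      nlinarith
    have hHT2 : eN (H.mulVec T2) ≤ M^2*(κm^s*N) := by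
      refine (hHle T2).trans ?_
      have h3 : (0:ℝ) ≤ M := hMpos.le
      nlinarith
    set c10 : ℝ := ε/(10*M^2) with hc10def
    have hc10pos : 0 < c10 := by rw [hc10def]; positivity
    have hF6 : M^2*ρ^s ≤ c10 := by
      rw [hc10def]
      have h5 : M^2 * ρ^s ≤ M^2*(ε^(12:ℕ)/((10*M)^(12:ℕ))) :=
        mul_le_mul_of_nonneg_left hρsb (by positivity)
      exact h5.trans (numeric2 hε0 hε1 hM)
    have hlow2 : P*N*c10 ≤ eN ((w^s).mulVec x'') := by
      have h1 : eN ((κ i0^s * y2 i0) • H.mulVec e1) - eN (H.mulVec T2) ≤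
          eN ((w^s).mulVec x'') := by
        rw [hws2]; exact eN_add_ge _ _
      have h2 : eN ((κ i0^s*y2 i0) • H.mulVec e1) = P * ‖y2 i0‖ * eN (H.mulVec e1) := by
        rw [eN_smul, norm_mul, norm_pow, hPdef]
      have h3 : P*(ε*N/(5*M))*(1/M) ≤ eN ((κ i0^s*y2 i0) • H.mulVec e1) := by
        rw [h2]
        have s1 : P*(ε*N/(5*M))*(1/M) ≤ P*‖y2 i0‖*(1/M) := by
          exact mul_le_mul_of_nonneg_right
            (mul_le_mul_of_nonneg_left hc2 hPpos.le) (by positivity)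
        refine s1.trans ?_
        exact mul_le_mul_of_nonneg_left hHe1_lb (by positivity)
      have h4 : P*(ε*N/(5*M))*(1/M) = (2*c10)*(P*N) := by
        rw [hc10def]; field_simp; ring
      have h5 : eN (H.mulVec T2) ≤ c10*(P*N) := by
        refine hHT2.trans ?_
        have h6 : M^2*(κm^s*N) = (M^2*ρ^s)*(P*N) := by rw [hρs]; ring
        rw [h6]
        exact mul_le_mul_of_nonneg_right hF6 (by positivity)
      have h7 : P*N*c10 = (2*c10)*(P*N) - c10*(P*N) := by ring
      linarith
    have ha0 : (w^s).mulVec x'' ≠ 0 := by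
      intro e
      rw [e, eN_zero] at hlow2
      have : 0 < P*N*c10 := by positivity
      linarith
    have hy20 : y2 i0 ≠ 0 := by
      intro e
      rw [e, norm_zero] at hc2
      have : (0:ℝ) < ε*N/(5*M) := by positivity
      linarith
    have hcne : κ i0 ^ s * y2 i0 ≠ 0 := mul_ne_zero (pow_ne_zero s (hκ0 i0)) hy20
    calc dP ((w^s).mulVec x'') (H.mulVec e1)
        = dP ((w^s).mulVec x'') ((κ i0^s*y2 i0) • H.mulVec e1) :=
          (dP_smul_right hcne _ _).symm
      _ ≤ 2 * eN ((w^s).mulVec x'' - (κ i0^s*y2 i0) • H.mulVec e1) / eN ((w^s).mulVec x'') :=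
          dP_le_two_mul ha0 (smul_ne_zero hcne hHe1_0)
      _ = 2 * eN (H.mulVec T2) / eN ((w^s).mulVec x'') := by
          rw [hws2, add_sub_cancel_left]
      _ ≤ 2 * (M^2*(κm^s*N)) / (P*N*c10) := by
          apply div_le_div₀ (by positivity) (by linarith) (by positivity) hlow2
      _ = 20*M^4*ρ^s/ε := by
          rw [hρs, hc10def]
          field_simp
          ring
      _ ≤ 20*M^4*(ε^(12:ℕ)/((10*M)^(12:ℕ)))/ε := by gcongr
      _ ≤ ε^11 := numeric1 hε0 hε1 hM
  -- ===== CONCLUSION 1 =====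
  refine ⟨?_, con2⟩
  set u : Fin n → 𝕜 := unit x'' with hudef
  set v : Fin n → 𝕜 := unit x' with hvdef
  have hu1 : eN u = 1 := eN_unit hx''0
  have hv1 : eN v = 1 := eN_unit hx'0
  have hu0 : u ≠ 0 := unit_ne_zero hx''0
  have hv0 : v ≠ 0 := unit_ne_zero hx'0
  obtain ⟨ζ, hζ, hatt⟩ := dP_attain hu0 hv0
  rw [unit_of_eN_one hu1, unit_of_eN_one hv1] at hatt
  have hζ0 : ζ ≠ 0 := by intro e; rw [e] at hζ; simp at hζ
  have hduv : dP u v = dP x'' x' := by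
    rw [hudef, hvdef, dP_unit_left hx''0, dP_unit_right hx'0]
  set d : ℝ := dP x'' x' with hddef
  have hd0 : 0 ≤ d := dP_nonneg x'' x'
  have hdθ : d ≤ θ := hx''θ
  set f : Fin n → 𝕜 := ζ • u - v with hfdef
  have hdf : eN f = d := hatt.symm.trans hduv
  set y : Fin n → 𝕜 := H'.mulVec v with hydef
  set g : Fin n → 𝕜 := H'.mulVec f with hgdef
  have hvf : v + f = ζ • u := by rw [hfdef]; abel
  have hyg : y + g = ζ • (H'.mulVec u) := by
    rw [hydef, hgdef, ← Matrix.mulVec_add, hvf, Matrix.mulVec_smul]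
  have hv_far : ∀ p ∈ W, p ≠ 0 → 9*ε/10 ≤ dP v p := by
    intro p hp hp0
    rw [hvdef, dP_unit_left hx'0]
    exact hx'W p hp hp0
  have hu_far : ∀ p ∈ W, p ≠ 0 → 2*ε/5 ≤ dP u p := by
    intro p hp hp0
    rw [hudef, dP_unit_left hx''0]
    exact hx''W p hp hp0
  have hy0 : 9*ε/(20*M) ≤ ‖y i0‖ := by
    have h1 := coordLB v hv0 (9*ε/10) (by positivity) (by linarith) hv_far
    rw [hv1] at h1
    calc 9*ε/(20*M) = 9*ε/10 * 1/(2*M) := by ring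
      _ ≤ ‖y i0‖ := h1
  have hyg0 : ε/(5*M) ≤ ‖(y+g) i0‖ := by
    have h1 := coordLB u hu0 (2*ε/5) (by positivity) (by linarith) hu_far
    rw [hu1] at h1
    have h2 : (y+g) i0 = ζ * (H'.mulVec u) i0 := by
      rw [hyg, Pi.smul_apply, smul_eq_mul]
    rw [h2, norm_mul, hζ, one_mul]
    calc ε/(5*M) = 2*ε/5*1/(2*M) := by ring
      _ ≤ ‖(H'.mulVec u) i0‖ := h1
  have hy0' : y i0 ≠ 0 := by
    intro e
    rw [e, norm_zero] at hy0
    have : 0 < 9*ε/(20*M) := by positivity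
    linarith
  have hgb : eN g ≤ M*d := by
    have := hH'le f
    rw [hdf] at this
    exact this
  have hyb : eN y ≤ M := by
    have := hH'le v
    rwa [hv1, mul_one] at this
  have hg0b : ‖g i0‖ ≤ M*d := (norm_coord_le g i0).trans hgb
  set lam : 𝕜 := ((y+g) i0) / (y i0) with hlamdef
  have hlam0 : lam ≠ 0 := by
    rw [hlamdef]
    apply div_ne_zero _ hy0'
    intro e
    rw [e, norm_zero] at hyg0
    have : 0 < ε/(5*M) := by positivity
    linarith
  set T : Fin n → 𝕜 := fun i => κ i ^ s * Function.update y i0 0 i with hTdef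
  set G : Fin n → 𝕜 := fun i => κ i ^ s * Function.update g i0 0 i with hGdef
  set q : Fin n → 𝕜 := (Matrix.diagonal κ ^ s).mulVec (y+g) with hqdef
  set p : Fin n → 𝕜 := (Matrix.diagonal κ ^ s).mulVec y with hpdef
  have claim : q - lam • p = (-(g i0/y i0)) • T + G := by
    rw [hqdef, hpdef]
    funext i
    simp only [Pi.sub_apply, Pi.add_apply, Pi.smul_apply, smul_eq_mul]
    rw [diagPow (y+g) i, diagPow y i]
    by_cases hi : i = i0
    · subst hi
      rw [hTdef, hGdef, hlamdef]
      simp only [Function.update_self, mul_zero, Pi.add_apply]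
      field_simp
      ring
    · rw [hTdef, hGdef, hlamdef]
      simp only [Function.update_of_ne hi, Pi.add_apply]
      field_simp
      ring
  have hT : eN T ≤ κm^s*M :=
    (tailBound y).trans (mul_le_mul_of_nonneg_left hyb (by positivity))
  have hG : eN G ≤ κm^s*(M*d) :=
    (tailBound g).trans (mul_le_mul_of_nonneg_left hgb (by positivity))
  have hratio : ‖g i0/y i0‖ ≤ M*d/(9*ε/(20*M)) := by
    rw [norm_div]
    exact div_le_div₀ (by positivity) hg0b (by positivity) hy0
  have hclaim_b : eN (q - lam • p) ≤ 4*M^3/ε*(κm^s*d) := by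
    rw [claim]
    calc eN ((-(g i0/y i0)) • T + G) ≤ eN ((-(g i0/y i0)) • T) + eN G := eN_add_le _ _
      _ ≤ (M*d/(9*ε/(20*M)))*(κm^s*M) + κm^s*(M*d) := by
          apply add_le_add _ hG
          rw [eN_smul, norm_neg]
          exact mul_le_mul hratio hT (eN_nonneg T) (by positivity)
      _ = (20*M^3/(9*ε) + M)*(κm^s*d) := by
          field_simp
      _ ≤ 4*M^3/ε*(κm^s*d) :=
          mul_le_mul_of_nonneg_right (numeric4 hε0 hε1 hM) (by positivity)
  have hqlow : P*(ε/(5*M)) ≤ eN q := by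
    calc P*(ε/(5*M)) ≤ P * ‖(y+g) i0‖ := mul_le_mul_of_nonneg_left hyg0 hPpos.le
      _ = ‖κ i0^s * (y+g) i0‖ := by rw [norm_mul, norm_pow, hPdef]
      _ = ‖q i0‖ := by rw [hqdef, diagPow (y+g) i0]
      _ ≤ eN q := norm_coord_le q i0
  have hHqlow : P*(ε/(5*M))/M ≤ eN (H.mulVec q) := by
    have h1 := hHge q
    rw [div_le_iff₀ hMpos]
    calc P*(ε/(5*M)) ≤ eN q := hqlow
      _ ≤ M * eN (H.mulVec q) := h1
      _ = eN (H.mulVec q) * M := by ring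
  have hq0 : H.mulVec q ≠ 0 := by
    intro e
    rw [e, eN_zero] at hHqlow
    have : 0 < P*(ε/(5*M))/M := by positivity
    linarith
  have hp_i0 : p i0 = κ i0^s * y i0 := by rw [hpdef]; exact diagPow y i0
  have hp0 : p ≠ 0 := by
    intro e
    have := congrFun e i0
    rw [hp_i0] at this
    exact mul_ne_zero (pow_ne_zero s (hκ0 i0)) hy0' this
  have hHp0 : H.mulVec p ≠ 0 := by
    rw [hHdef]
    exact mulVec_ne_zero h hp0
  -- identification of the two projective points
  have e1 : (w^s).mulVec u = ((((eN x'')⁻¹:ℝ)):𝕜) • (w^s).mulVec x'' := by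
    rw [hudef, unit_smul_eq, Matrix.mulVec_smul]
  have e2 : (w^s).mulVec v = ((((eN x')⁻¹:ℝ)):𝕜) • (w^s).mulVec x' := by
    rw [hvdef, unit_smul_eq, Matrix.mulVec_smul]
  have step1 : dP ((w^s).mulVec x'') ((w^s).mulVec x') =
      dP ((w^s).mulVec u) ((w^s).mulVec v) := by
    rw [e1, e2, dP_smul_left (ofReal_eN_ne_zero' hx''0),
      dP_smul_right (ofReal_eN_ne_zero' hx'0)]
  have step2 : (w^s).mulVec v = H.mulVec p := by
    rw [wPow v, hpdef, ← hydef]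
  have step3 : ζ • ((w^s).mulVec u) = H.mulVec q := by
    rw [hqdef, hyg, Matrix.mulVec_smul, Matrix.mulVec_smul, ← wPow u]
  have step4 : dP ((w^s).mulVec u) ((w^s).mulVec v) =
      dP (H.mulVec q) (H.mulVec p) := by
    rw [← dP_smul_left hζ0, step3, step2]
  rw [step1, step4]
  -- main bound
  have main : dP (H.mulVec q) (H.mulVec p) ≤
      2 * (M * (4*M^3/ε*(κm^s*d))) / (P*(ε/(5*M))/M) := by
    calc dP (H.mulVec q) (H.mulVec p)
        = dP (H.mulVec q) (lam • H.mulVec p) := (dP_smul_right hlam0 _ _).symm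
      _ = dP (H.mulVec q) (H.mulVec (lam • p)) := by rw [Matrix.mulVec_smul]
      _ ≤ 2 * eN (H.mulVec q - H.mulVec (lam • p)) / eN (H.mulVec q) := by
          apply dP_le_two_mul hq0
          rw [Matrix.mulVec_smul]
          exact smul_ne_zero hlam0 hHp0
      _ = 2 * eN (H.mulVec (q - lam • p)) / eN (H.mulVec q) := by
          rw [Matrix.mulVec_sub]
      _ ≤ 2 * (M * (4*M^3/ε*(κm^s*d))) / (P*(ε/(5*M))/M) := by
          apply div_le_div₀ (by positivity) _ (by positivity) hHqlow
          have h1 := hHle (q - lam • p)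
          have h2 := mul_le_mul_of_nonneg_left hclaim_b hMpos.le
          linarith
  refine main.trans ?_
  -- final numeric estimate with rpow
  have hsimp : 2 * (M * (4*M^3/ε*(κm^s*d))) / (P*(ε/(5*M))/M) = 40*M^6*ρ^s*d/ε^2 := by
    rw [hρs]
    field_simp
    ring
  rw [hsimp]
  have er1 : (ρ:ℝ)^s = ρ^((s:ℝ)/2) * ρ^((s:ℝ)/2) := by
    rw [← Real.rpow_natCast ρ s, ← Real.rpow_add hρpos]
    congr 1
    ring
  have er2 : ρ^((s:ℝ)/2) ≤ ρ^((1:ℝ)/2) := by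
    apply Real.rpow_le_rpow_of_exponent_ge hρpos hρlt1.le
    have : (1:ℝ) ≤ (s:ℝ) := by exact_mod_cast hs
    linarith
  have er3 : ρ^((1:ℝ)/2) ≤ ((ε/(10*M))^(12:ℕ))^((1:ℝ)/2) :=
    Real.rpow_le_rpow hρpos.le hρle (by norm_num)
  have er4 : ((ε/(10*M))^(12:ℕ))^((1:ℝ)/2) = (ε/(10*M))^(6:ℕ) := by
    rw [← Real.rpow_natCast (ε/(10*M)) 12, ← Real.rpow_mul hβpos.le,
      ← Real.rpow_natCast (ε/(10*M)) 6]
    norm_num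
  have hhalf : ρ^((s:ℝ)/2) ≤ ε^2/(40*M^6) := by
    refine er2.trans (er3.trans ?_)
    rw [er4]
    exact numeric3 hε0 hε1 hM
  have hrpos : 0 < ρ^((s:ℝ)/2) := Real.rpow_pos_of_pos hρpos _
  calc 40*M^6*ρ^s*d/ε^2 ≤ 40*M^6*ρ^s*θ/ε^2 := by gcongr
    _ = θ * ((40*M^6/ε^2 * ρ^((s:ℝ)/2)) * ρ^((s:ℝ)/2)) := by rw [er1]; ring
    _ ≤ θ * ((40*M^6/ε^2 * (ε^2/(40*M^6))) * ρ^((s:ℝ)/2)) := by gcongr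
    _ = θ * ρ^((s:ℝ)/2) := by
        rw [show 40*M^6/ε^2 * (ε^2/(40*M^6)) = 1 by field_simp]
        ring
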